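/- Let I ⊆ J be ideals of a Noetherian commutative ring R and p a prime ideal such that J·R_p = (I·R_p : (pR_p)^∞), i.e., J_p is the saturation of I_p with respect to p in R_p. Then there exists m₀ ≥ 1 such that for all m ≥ m₀, the natural surjection induces an isomorphism J_p/I_p ≅ (J_p + p^m R_p)/(I_p + p^m R_p). Equivalently, J_p ∩ (I_p + p^m R_p) = I_p for m ≫ 0. -/

import Mathlib

/-- let `I ⊆ J` be ideals of a Noetherian commutative ring `R` and `p` a
prime ideal such that `J·R_p` is the saturation `(I·R_p : (pR_p)^∞)`.  Then there is
`m₀ ≥ 1` such that for all `m ≥ m₀` we have `J_p ∩ (I_p + p^m R_p) = I_p`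
(equivalently, the natural surjection `J_p/I_p → (J_p + p^m R_p)/(I_p + p^m R_p)` is an
isomorphism for all `m ≥ m₀`). -/
theorem saturation_stabilizes {R : Type*} [CommRing R] [IsNoetherianRing R]
    (I J p : Ideal R) [p.IsPrime] (hIJ : I ≤ J) :
    let Rp := Localization.AtPrime p
    let f := algebraMap R Rp
    let Ip := I.map f
    let Jp := J.map f
    let pp := p.map f
    Jp = (⨆ k : ℕ, Submodule.colon Ip ((pp ^ k : Ideal Rp) : Set Rp)) →
      ∃ m₀ : ℕ, 1 ≤ m₀ ∧ ∀ m : ℕ, m₀ ≤ m → Jp ⊓ (Ip + pp ^ m) = Ip := by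
  intro Rp f Ip Jp pp hsat
  haveI : IsNoetherianRing Rp :=
    IsLocalization.isNoetherianRing p.primeCompl Rp ‹_›
  -- the chain of colon ideals is monotone
  have hmono : Monotone (fun k : ℕ => Submodule.colon Ip ((pp ^ k : Ideal Rp) : Set Rp)) := by
    intro a b hab
    exact Submodule.colon_mono le_rfl (SetLike.coe_subset_coe.mpr (Ideal.pow_le_pow_right hab))
  obtain ⟨N, hN⟩ := monotone_stabilizes_iff_noetherian.mpr ‹IsNoetherianRing Rp›
    ⟨fun k : ℕ => Submodule.colon Ip ((pp ^ k : Ideal Rp) : Set Rp), hmono⟩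
  -- hence Jp ≤ (Ip : pp^N), i.e. pp^N * Jp ≤ Ip
  have hJN : Jp ≤ Submodule.colon Ip ((pp ^ N : Ideal Rp) : Set Rp) := by
    rw [hsat]
    apply iSup_le
    intro k
    rcases le_total k N with h | h
    · exact hmono h
    · exact le_of_eq (hN k h).symm
  have hppJ : pp ^ N * Jp ≤ Ip := by
    rw [Ideal.mul_le]
    intro a ha b hb
    have := hJN hb
    rw [Submodule.mem_colon] at this
    simpa [mul_comm] using this a ha
  -- Artin–Rees
  obtain ⟨k, hk⟩ := Ideal.exists_pow_inf_eq_pow_smul pp (Jp : Submodule Rp Rp)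
  refine ⟨k + N + 1, Nat.le_add_left 1 (k + N), fun m hm => ?_⟩
  -- modular law
  have hIJp : Ip ≤ Jp := Ideal.map_mono hIJ
  have key : Jp ⊓ pp ^ m ≤ Ip := by
    have h1 : pp ^ m • (⊤ : Submodule Rp Rp) ⊓ Jp = pp ^ (m - k) • (pp ^ k • ⊤ ⊓ Jp) :=
      hk m (by omega)
    have hm' : Jp ⊓ pp ^ m ≤ pp ^ (m - k) * Jp := by
      intro x hx
      have : x ∈ pp ^ (m - k) • ((pp ^ k • ⊤ ⊓ Jp : Submodule Rp Rp)) := by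
        rw [← h1]
        exact ⟨by simpa [Ideal.smul_top_eq_map, smul_eq_mul, Ideal.mul_top]
          using hx.2, hx.1⟩
      have h2 : pp ^ (m - k) • ((pp ^ k • ⊤ ⊓ Jp : Submodule Rp Rp)) ≤ pp ^ (m - k) * Jp :=
        Submodule.smul_mono le_rfl inf_le_right
      exact h2 this
    refine hm'.trans ?_
    calc pp ^ (m - k) * Jp ≤ pp ^ N * Jp :=
          Ideal.mul_mono_left (Ideal.pow_le_pow_right (by omega))
      _ ≤ Ip := hppJ
  apply le_antisymm
  · intro x hx
    obtain ⟨hxJ, hxsum⟩ := hx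
    -- x ∈ Ip + pp^m and x ∈ Jp; write x = i + q
    have hxsum' : x ∈ Ip ⊔ pp ^ m := hxsum
    rw [Submodule.mem_sup] at hxsum'
    obtain ⟨i, hi, q, hq, rfl⟩ := hxsum'
    have hqJ : q ∈ Jp := by
      have : (i + q) - i ∈ Jp := Submodule.sub_mem _ hxJ (hIJp hi)
      simpa using this
    have : q ∈ Ip := key ⟨hqJ, hq⟩
    exact Submodule.add_mem _ hi this
  · exact le_inf hIJp le_sup_left
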